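/- For n measurements, there is a constant c_n ∈ ℝ (independent of φ) such that the cumulative functional J_{Full,n}(φ) = ⟨φ − φ₀, B₀⁻¹(φ − φ₀)⟩ + Σ_{j=1}^n ⟨f_j − A_j φ, R⁻¹(f_j − A_j φ)⟩ satisfies J_{Full,n}(φ) = ⟨φ − φ_n, B_n⁻¹(φ − φ_n)⟩ + c_n for all φ ∈ X, where φ_n and B_n are the Kalman filter iterates. -/
import Mathlib


open Matrix ComplexOrder Finset

section helpers
variable {a b c : Type*} [Fintype a] [Fintype b] [Fintype c]

private lemma Qleft (A : Matrix b a ℂ) (M : Matrix b c ℂ) (x : a → ℂ) (y : c → ℂ) :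
    star (A *ᵥ x) ⬝ᵥ (M *ᵥ y) = star x ⬝ᵥ ((Aᴴ * M) *ᵥ y) := by
  rw [star_mulVec, dotProduct_mulVec, dotProduct_mulVec, vecMul_vecMul]

private lemma Qright (M : Matrix a b ℂ) (A : Matrix b c ℂ) (x : a → ℂ) (y : c → ℂ) :
    star x ⬝ᵥ (M *ᵥ (A *ᵥ y)) = star x ⬝ᵥ ((M * A) *ᵥ y) := by
  rw [mulVec_mulVec]

private lemma Qexpand (M : Matrix a a ℂ) (x y : a → ℂ) :
    star (x - y) ⬝ᵥ (M *ᵥ (x - y))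
      = star x ⬝ᵥ (M *ᵥ x) - star x ⬝ᵥ (M *ᵥ y) - star y ⬝ᵥ (M *ᵥ x)
        + star y ⬝ᵥ (M *ᵥ y) := by
  simp only [star_sub, mulVec_sub, sub_dotProduct, dotProduct_sub]
  ring

private lemma herm_real {M : Matrix a a ℂ} (hM : M.IsHermitian) (x : a → ℂ) :
    (((star x ⬝ᵥ (M *ᵥ x)).re : ℝ) : ℂ) = star x ⬝ᵥ (M *ᵥ x) := by
  have h : (starRingEnd ℂ) (star x ⬝ᵥ (M *ᵥ x)) = star x ⬝ᵥ (M *ᵥ x) := by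
    have h1 : star x ⬝ᵥ (M *ᵥ x) = star (star (M *ᵥ x) ⬝ᵥ x) := star_dotProduct _ _
    have h2 : star (M *ᵥ x) ⬝ᵥ x = star x ⬝ᵥ (M *ᵥ x) := by
      rw [star_mulVec, ← dotProduct_mulVec, hM.eq]
    conv_lhs => rw [h1, h2]
    simp [Complex.star_def]
  exact Complex.conj_eq_iff_re.mp h
end helpers

section kalmanaux
variable {m l : ℕ}

private lemma kalman_step (B : Matrix (Fin m) (Fin m) ℂ) (hB : B.PosDef)
    (R : Matrix (Fin l) (Fin l) ℂ) (hR : R.PosDef)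
    (A : Matrix (Fin l) (Fin m) ℂ) :
    ((1 - B * Aᴴ * (R + A * B * Aᴴ)⁻¹ * A) * B).PosDef ∧
    (((1 - B * Aᴴ * (R + A * B * Aᴴ)⁻¹ * A) * B)⁻¹ = B⁻¹ + Aᴴ * R⁻¹ * A) := by
  set S : Matrix (Fin l) (Fin l) ℂ := R + A * B * Aᴴ with hSdef
  set K : Matrix (Fin m) (Fin l) ℂ := B * Aᴴ * S⁻¹ with hKdef
  set P : Matrix (Fin m) (Fin m) ℂ := B⁻¹ + Aᴴ * R⁻¹ * A with hPdef
  have hSpd : S.PosDef := hR.add_posSemidef (hB.posSemidef.mul_mul_conjTranspose_same A)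
  have hPpd : P.PosDef := hB.inv.add_posSemidef (hR.inv.posSemidef.conjTranspose_mul_mul_same A)
  have hBd : IsUnit B.det := (Matrix.isUnit_iff_isUnit_det _).mp hB.isUnit
  have hRd : IsUnit R.det := (Matrix.isUnit_iff_isUnit_det _).mp hR.isUnit
  have hSd : IsUnit S.det := (Matrix.isUnit_iff_isUnit_det _).mp hSpd.isUnit
  have h1 : A * B * Aᴴ = S - R := by rw [hSdef]; abel
  have key : S⁻¹ * (A * B * Aᴴ) * R⁻¹ = R⁻¹ - S⁻¹ := by
    rw [h1, Matrix.mul_sub, Matrix.sub_mul, Matrix.nonsing_inv_mul _ hSd, Matrix.one_mul,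
      Matrix.mul_assoc, Matrix.mul_nonsing_inv _ hRd, Matrix.mul_one]
  have keyA : S⁻¹ * (A * (B * (Aᴴ * (R⁻¹ * A)))) = R⁻¹ * A - S⁻¹ * A := by
    have := congrArg (· * A) key
    simp only [Matrix.sub_mul, Matrix.mul_assoc] at this
    simpa [Matrix.mul_assoc] using this
  have hBB : B * B⁻¹ = 1 := Matrix.mul_nonsing_inv _ hBd
  have hB'P : ((1 - K * A) * B) * P = 1 := by
    rw [hKdef, hPdef]
    simp only [Matrix.sub_mul, Matrix.add_mul, Matrix.mul_add, Matrix.mul_sub,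
      Matrix.one_mul, Matrix.mul_one, Matrix.mul_assoc, hBB]
    rw [keyA]
    simp only [Matrix.mul_sub, Matrix.mul_add, Matrix.mul_one]
    abel
  refine ⟨?_, ?_⟩
  · have hPinv : P⁻¹ = (1 - K * A) * B := Matrix.inv_eq_left_inv hB'P
    rw [← hPinv]; exact hPpd.inv
  · rw [Matrix.inv_eq_right_inv hB'P]

private lemma kalman_quad (B : Matrix (Fin m) (Fin m) ℂ) (hB : B.PosDef)
    (R : Matrix (Fin l) (Fin l) ℂ) (hR : R.PosDef)
    (A : Matrix (Fin l) (Fin m) ℂ) (u : Fin m → ℂ) (g : Fin l → ℂ) :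
    star u ⬝ᵥ (B⁻¹ *ᵥ u) + star (g - A *ᵥ u) ⬝ᵥ (R⁻¹ *ᵥ (g - A *ᵥ u))
      = star (u - (B * Aᴴ * (R + A * B * Aᴴ)⁻¹) *ᵥ g) ⬝ᵥ
          (((1 - B * Aᴴ * (R + A * B * Aᴴ)⁻¹ * A) * B)⁻¹ *ᵥ
            (u - (B * Aᴴ * (R + A * B * Aᴴ)⁻¹) *ᵥ g))
        + star g ⬝ᵥ ((R + A * B * Aᴴ)⁻¹ *ᵥ g) := by
  set S : Matrix (Fin l) (Fin l) ℂ := R + A * B * Aᴴ with hSdef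
  set K : Matrix (Fin m) (Fin l) ℂ := B * Aᴴ * S⁻¹ with hKdef
  set P : Matrix (Fin m) (Fin m) ℂ := B⁻¹ + Aᴴ * R⁻¹ * A with hPdef
  have hSpd : S.PosDef := hR.add_posSemidef (hB.posSemidef.mul_mul_conjTranspose_same A)
  have hPpd : P.PosDef := hB.inv.add_posSemidef (hR.inv.posSemidef.conjTranspose_mul_mul_same A)
  have hBd : IsUnit B.det := (Matrix.isUnit_iff_isUnit_det _).mp hB.isUnit
  have hRd : IsUnit R.det := (Matrix.isUnit_iff_isUnit_det _).mp hR.isUnit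
  have hSd : IsUnit S.det := (Matrix.isUnit_iff_isUnit_det _).mp hSpd.isUnit
  have h1 : A * B * Aᴴ = S - R := by rw [hSdef]; abel
  have key : S⁻¹ * (A * B * Aᴴ) * R⁻¹ = R⁻¹ - S⁻¹ := by
    rw [h1, Matrix.mul_sub, Matrix.sub_mul, Matrix.nonsing_inv_mul _ hSd, Matrix.one_mul,
      Matrix.mul_assoc, Matrix.mul_nonsing_inv _ hRd, Matrix.mul_one]
  have key' : R⁻¹ * (A * B * Aᴴ) * S⁻¹ = R⁻¹ - S⁻¹ := by
    rw [h1, Matrix.mul_sub, Matrix.sub_mul, Matrix.mul_assoc,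
      Matrix.mul_nonsing_inv _ hSd, Matrix.mul_one, Matrix.nonsing_inv_mul _ hRd,
      Matrix.one_mul]
  have keyA : S⁻¹ * (A * (B * (Aᴴ * (R⁻¹ * A)))) = R⁻¹ * A - S⁻¹ * A := by
    have := congrArg (· * A) key
    simp only [Matrix.sub_mul, Matrix.mul_assoc] at this
    simpa [Matrix.mul_assoc] using this
  have hBB : B * B⁻¹ = 1 := Matrix.mul_nonsing_inv _ hBd
  have hB'P : ((1 - K * A) * B) * P = 1 := by
    rw [hKdef, hPdef]
    simp only [Matrix.sub_mul, Matrix.add_mul, Matrix.mul_add, Matrix.mul_sub,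
      Matrix.one_mul, Matrix.mul_one, Matrix.mul_assoc, hBB]
    rw [keyA]
    simp only [Matrix.mul_sub, Matrix.mul_add, Matrix.mul_one]
    abel
  have hBinv : ((1 - K * A) * B)⁻¹ = P := Matrix.inv_eq_right_inv hB'P
  have hKH : Kᴴ = S⁻¹ * (A * B) := by
    rw [hKdef]
    simp [conjTranspose_mul, hSpd.inv.isHermitian.eq, hB.isHermitian.eq, Matrix.mul_assoc]
  have hPK : P * K = Aᴴ * R⁻¹ := by
    rw [hPdef, hKdef]
    simp only [Matrix.add_mul, Matrix.mul_assoc]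
    rw [← Matrix.mul_assoc B⁻¹ B, Matrix.nonsing_inv_mul _ hBd, Matrix.one_mul]
    have keyB : Aᴴ * (R⁻¹ * (A * (B * (Aᴴ * S⁻¹)))) = Aᴴ * R⁻¹ - Aᴴ * S⁻¹ := by
      have := congrArg (Aᴴ * ·) key'
      simp only [Matrix.mul_sub, Matrix.mul_assoc] at this
      simpa [Matrix.mul_assoc] using this
    rw [keyB]
    abel
  have hKP : Kᴴ * P = R⁻¹ * A := by
    have := congrArg conjTranspose hPK
    simpa [conjTranspose_mul, hPpd.isHermitian.eq, hR.inv.isHermitian.eq] using this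
  have hKAR : Kᴴ * (Aᴴ * R⁻¹) = R⁻¹ - S⁻¹ := by
    rw [hKH]
    simp only [Matrix.mul_assoc]
    simpa [Matrix.mul_assoc] using key
  rw [hBinv, Qexpand, Qexpand]
  simp only [Qleft, Qright]
  rw [hPK, hKP, hKAR]
  simp only [Matrix.mul_assoc, Matrix.add_mulVec, Matrix.sub_mulVec, dotProduct_add,
    dotProduct_sub]
  rw [hPdef, Matrix.mul_assoc, Matrix.add_mulVec, dotProduct_add]
  ring
end kalmanaux

theorem kalman_cumulative_functional
    {m l : ℕ}
    (B₀ : Matrix (Fin m) (Fin m) ℂ) (hB₀ : B₀.PosDef)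
    (R : Matrix (Fin l) (Fin l) ℂ) (hR : R.PosDef)
    (A : ℕ → Matrix (Fin l) (Fin m) ℂ)
    (f : ℕ → (Fin l → ℂ))
    (φ₀ : Fin m → ℂ)
    (B : ℕ → Matrix (Fin m) (Fin m) ℂ)
    (φ : ℕ → (Fin m → ℂ))
    (K : ℕ → Matrix (Fin m) (Fin l) ℂ)
    (hB0 : B 0 = B₀)
    (hφ0 : φ 0 = φ₀)
    (hK : ∀ n, K n = B n * (A n)ᴴ * (R + A n * B n * (A n)ᴴ)⁻¹)
    (hφ : ∀ n, φ (n + 1) = φ n + K n *ᵥ (f n - A n *ᵥ φ n))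
    (hBrec : ∀ n, B (n + 1) = (1 - K n * A n) * B n) :
    ∃ c : ℕ → ℝ, ∀ (n : ℕ) (ψ : Fin m → ℂ),
      star (ψ - φ₀) ⬝ᵥ (B₀⁻¹ *ᵥ (ψ - φ₀))
        + ∑ j ∈ range n, star (f j - A j *ᵥ ψ) ⬝ᵥ (R⁻¹ *ᵥ (f j - A j *ᵥ ψ))
      = star (ψ - φ n) ⬝ᵥ ((B n)⁻¹ *ᵥ (ψ - φ n)) + (c n : ℂ) := by
  classical
  set d : ℕ → ℂ := fun j =>
    star (f j - A j *ᵥ φ j) ⬝ᵥ ((R + A j * B j * (A j)ᴴ)⁻¹ *ᵥ (f j - A j *ᵥ φ j)) with hd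
  have hBpd : ∀ n, (B n).PosDef := by
    intro n
    induction n with
    | zero => rw [hB0]; exact hB₀
    | succ n ih =>
      rw [hBrec n, hK n]
      exact (kalman_step (B n) ih R hR (A n)).1
  have main : ∀ (n : ℕ) (ψ : Fin m → ℂ),
      star (ψ - φ₀) ⬝ᵥ (B₀⁻¹ *ᵥ (ψ - φ₀))
        + ∑ j ∈ range n, star (f j - A j *ᵥ ψ) ⬝ᵥ (R⁻¹ *ᵥ (f j - A j *ᵥ ψ))
      = star (ψ - φ n) ⬝ᵥ ((B n)⁻¹ *ᵥ (ψ - φ n)) + ∑ j ∈ range n, d j := by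
    intro n
    induction n with
    | zero => intro ψ; simp [hB0, hφ0]
    | succ n ih =>
      intro ψ
      rw [sum_range_succ, sum_range_succ, ← add_assoc, ih ψ]
      have hq := kalman_quad (B n) (hBpd n) R hR (A n) (ψ - φ n) (f n - A n *ᵥ φ n)
      have e1 : (f n - A n *ᵥ φ n) - A n *ᵥ (ψ - φ n) = f n - A n *ᵥ ψ := by
        rw [mulVec_sub]; abel
      have e2 : (ψ - φ n) - (B n * (A n)ᴴ * (R + A n * B n * (A n)ᴴ)⁻¹) *ᵥ
          (f n - A n *ᵥ φ n) = ψ - φ (n + 1) := by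
        rw [hφ n, hK n]; abel
      have e3 : (1 - B n * (A n)ᴴ * (R + A n * B n * (A n)ᴴ)⁻¹ * A n) * B n = B (n + 1) := by
        rw [hBrec n, hK n]
      rw [e1, e2, e3] at hq
      have hdn : d n = star (f n - A n *ᵥ φ n) ⬝ᵥ
          ((R + A n * B n * (A n)ᴴ)⁻¹ *ᵥ (f n - A n *ᵥ φ n)) := rfl
      rw [hdn]
      linear_combination hq
  have hre : ∀ j, (((d j).re : ℝ) : ℂ) = d j := by
    intro j
    have hS : (R + A j * B j * (A j)ᴴ).PosDef :=
      hR.add_posSemidef ((hBpd j).posSemidef.mul_mul_conjTranspose_same (A j))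
    exact herm_real hS.inv.isHermitian _
  refine ⟨fun n => (∑ j ∈ range n, d j).re, ?_⟩
  intro n ψ
  rw [main n ψ]
  congr 1
  symm
  calc ((∑ j ∈ range n, d j).re : ℂ)
      = ∑ j ∈ range n, (((d j).re : ℝ) : ℂ) := by
        rw [Complex.re_sum]; push_cast; ring
    _ = ∑ j ∈ range n, d j := sum_congr rfl fun j _ => hre j
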